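/- Let c be the structure constants of a Chevalley basis of a simple Lie algebra with root system Ψ, satisfying: c_{β,γ} = −c_{γ,β}; c_{β,γ} = c_{γ,δ} = c_{δ,β} whenever β,γ,δ are long roots with β+γ+δ = 0; c_{β,γ} = ±1 when β,γ are long roots with β+γ a root; c_{β,γ} = 0 when β+γ is not a root; and c_{β,γ}c_{δ,ε} + c_{γ,δ}c_{β,ε} + c_{δ,β}c_{γ,ε} = 0 whenever β,γ,δ,ε are long roots summing to 0 with no two opposite. If β, γ are orthogonal long roots with ⟨β,ρ⟩ = ⟨γ,ρ⟩ = 1 (ρ the highest root), then β−ρ, γ−ρ and ρ−β−γ are roots, each of c_{β,γ−ρ}, c_{γ,β−ρ}, c_{β,−ρ}, c_{γ,−ρ} is ±1, and their product equals 1. -/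

import Mathlib

open scoped RealInnerProductSpace

/-- An irreducible (reduced, crystallographic) root system together with a base
and the highest root `ρ` with respect to that base. -/
structure BasedRootSystem (ι V : Type*) [Fintype ι]
    [NormedAddCommGroup V] [InnerProductSpace ℝ V] where
  Ψ : Set V
  base : ι → V
  ρ : V
  finite : Ψ.Finite
  ne_zero : ∀ β ∈ Ψ, β ≠ 0
  neg_mem : ∀ β ∈ Ψ, -β ∈ Ψ
  base_mem : ∀ i, base i ∈ Ψ
  reduced : ∀ β ∈ Ψ, ∀ t : ℝ, t • β ∈ Ψ → t = 1 ∨ t = -1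
  cartanInt : ∀ β ∈ Ψ, ∀ γ ∈ Ψ, ∃ n : ℤ, 2 * ⟪β, γ⟫ / ⟪γ, γ⟫ = (n : ℝ)
  reflect_mem : ∀ β ∈ Ψ, ∀ γ ∈ Ψ, β - (2 * ⟪β, γ⟫ / ⟪γ, γ⟫) • γ ∈ Ψ
  irreducible : ∀ S₁ S₂ : Set V, (∀ β ∈ Ψ, β ∈ S₁ ∨ β ∈ S₂) →
    (∀ x ∈ S₁, ∀ y ∈ S₂, ⟪x, y⟫ = 0) → (∀ β ∈ Ψ, β ∈ S₁) ∨ (∀ β ∈ Ψ, β ∈ S₂)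
  base_pos : ∀ β ∈ Ψ, (∃ c : ι → ℕ, β = ∑ i, (c i : ℝ) • base i) ∨
    (∃ c : ι → ℕ, β = -∑ i, (c i : ℝ) • base i)
  rho_mem : ρ ∈ Ψ
  rho_highest : ∀ β ∈ Ψ, ∃ c : ι → ℕ, ρ - β = ∑ i, (c i : ℝ) • base i

namespace BasedRootSystem

variable {ι V : Type*} [Fintype ι] [NormedAddCommGroup V] [InnerProductSpace ℝ V]

/-- The Cartan pairing `⟨β, γ⟩ = 2(β,γ)/(γ,γ)`. -/
noncomputable def pair (_S : BasedRootSystem ι V) (β γ : V) : ℝ :=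
  2 * ⟪β, γ⟫ / ⟪γ, γ⟫

/-- A root is long if it has the same length as the highest root. -/
def IsLong (S : BasedRootSystem ι V) (β : V) : Prop := ⟪β, β⟫ = ⟪S.ρ, S.ρ⟫

end BasedRootSystem

/-- For orthogonal long roots β, γ of α-height 1: β−ρ, γ−ρ and ρ−β−γ are
roots, the four structure constants are ±1, and their product is 1. -/
theorem stmt15 {ι V : Type*} [Fintype ι] [NormedAddCommGroup V] [InnerProductSpace ℝ V]
    (S : BasedRootSystem ι V) (c : V → V → ℤ)
    (hanti : ∀ β ∈ S.Ψ, ∀ γ ∈ S.Ψ, c β γ = - c γ β)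
    (hcyc : ∀ β ∈ S.Ψ, ∀ γ ∈ S.Ψ, ∀ δ ∈ S.Ψ, S.IsLong β → S.IsLong γ → S.IsLong δ →
      β + γ + δ = 0 → c β γ = c γ δ ∧ c γ δ = c δ β)
    (hpm : ∀ β ∈ S.Ψ, ∀ γ ∈ S.Ψ, S.IsLong β → S.IsLong γ → β + γ ∈ S.Ψ →
      c β γ = 1 ∨ c β γ = -1)
    (hzero : ∀ β γ : V, β + γ ∉ S.Ψ → c β γ = 0)
    (h4 : ∀ β ∈ S.Ψ, ∀ γ ∈ S.Ψ, ∀ δ ∈ S.Ψ, ∀ ε ∈ S.Ψ,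
      S.IsLong β → S.IsLong γ → S.IsLong δ → S.IsLong ε →
      β + γ + δ + ε = 0 →
      β ≠ -γ → β ≠ -δ → β ≠ -ε → γ ≠ -δ → γ ≠ -ε → δ ≠ -ε →
      c β γ * c δ ε + c γ δ * c β ε + c δ β * c γ ε = 0)
    (β γ : V) (hβ : β ∈ S.Ψ) (hγ : γ ∈ S.Ψ)
    (hβl : S.IsLong β) (hγl : S.IsLong γ)
    (horth : ⟪β, γ⟫ = 0)
    (hβρ : S.pair β S.ρ = 1) (hγρ : S.pair γ S.ρ = 1)
    (hβγ : β + γ ∉ S.Ψ) :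
    (β - S.ρ ∈ S.Ψ) ∧ (γ - S.ρ ∈ S.Ψ) ∧ (S.ρ - β - γ ∈ S.Ψ) ∧
    (c β (γ - S.ρ) = 1 ∨ c β (γ - S.ρ) = -1) ∧
    (c γ (β - S.ρ) = 1 ∨ c γ (β - S.ρ) = -1) ∧
    (c β (-S.ρ) = 1 ∨ c β (-S.ρ) = -1) ∧
    (c γ (-S.ρ) = 1 ∨ c γ (-S.ρ) = -1) ∧
    c β (γ - S.ρ) * c γ (β - S.ρ) * c β (-S.ρ) * c γ (-S.ρ) = 1 := by

  have hρ := S.rho_mem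
  have hρne : S.ρ ≠ 0 := S.ne_zero _ hρ
  have hρρ : ⟪S.ρ, S.ρ⟫ ≠ 0 := fun h => hρne (inner_self_eq_zero.mp h)
  have hγne : γ ≠ 0 := S.ne_zero _ hγ
  have hγγ : ⟪γ, γ⟫ ≠ 0 := fun h => hγne (inner_self_eq_zero.mp h)
  have hβρ1 : 2 * ⟪β, S.ρ⟫ / ⟪S.ρ, S.ρ⟫ = 1 := hβρ
  have hγρ1 : 2 * ⟪γ, S.ρ⟫ / ⟪S.ρ, S.ρ⟫ = 1 := hγρ
  have h2β : 2 * ⟪β, S.ρ⟫ = ⟪S.ρ, S.ρ⟫ := by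
    field_simp at hβρ1; linarith
  have h2γ : 2 * ⟪γ, S.ρ⟫ = ⟪S.ρ, S.ρ⟫ := by
    field_simp at hγρ1; linarith
  -- memberships
  have hβmρ : β - S.ρ ∈ S.Ψ := by
    have h := S.reflect_mem β hβ S.ρ hρ
    rwa [hβρ1, one_smul] at h
  have hγmρ : γ - S.ρ ∈ S.Ψ := by
    have h := S.reflect_mem γ hγ S.ρ hρ
    rwa [hγρ1, one_smul] at h
  have hcomm : ∀ x y : V, ⟪x, y⟫ = ⟪y, x⟫ := fun x y => real_inner_comm y x
  have hpairm1 : 2 * ⟪β - S.ρ, γ⟫ / ⟪γ, γ⟫ = -1 := by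
    rw [inner_sub_left]
    have h1 : ⟪S.ρ, γ⟫ = ⟪γ, S.ρ⟫ := hcomm _ _
    have h2 : ⟪γ, γ⟫ = ⟪S.ρ, S.ρ⟫ := hγl
    field_simp
    linarith
  have hsum : β - S.ρ + γ ∈ S.Ψ := by
    have h := S.reflect_mem (β - S.ρ) hβmρ γ hγ
    rw [hpairm1] at h
    have he : β - S.ρ - (-1 : ℝ) • γ = β - S.ρ + γ := by
      rw [neg_one_smul]; abel
    rwa [he] at h
  have hmid : S.ρ - β - γ ∈ S.Ψ := by
    have h := S.neg_mem _ hsum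
    have he : -(β - S.ρ + γ) = S.ρ - β - γ := by abel
    rwa [he] at h
  have hmρ : -S.ρ ∈ S.Ψ := S.neg_mem _ hρ
  -- lengths
  have hmρl : S.IsLong (-S.ρ) := by
    simp [BasedRootSystem.IsLong, inner_neg_neg]
  have hβmρl : S.IsLong (β - S.ρ) := by
    show ⟪β - S.ρ, β - S.ρ⟫ = ⟪S.ρ, S.ρ⟫
    simp only [inner_sub_left, inner_sub_right]
    have h1 : ⟪S.ρ, β⟫ = ⟪β, S.ρ⟫ := hcomm _ _
    have h2 : ⟪β, β⟫ = ⟪S.ρ, S.ρ⟫ := hβl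
    linarith
  have hγmρl : S.IsLong (γ - S.ρ) := by
    show ⟪γ - S.ρ, γ - S.ρ⟫ = ⟪S.ρ, S.ρ⟫
    simp only [inner_sub_left, inner_sub_right]
    have h1 : ⟪S.ρ, γ⟫ = ⟪γ, S.ρ⟫ := hcomm _ _
    have h2 : ⟪γ, γ⟫ = ⟪S.ρ, S.ρ⟫ := hγl
    linarith
  have hmidl : S.IsLong (S.ρ - β - γ) := by
    show ⟪S.ρ - β - γ, S.ρ - β - γ⟫ = ⟪S.ρ, S.ρ⟫
    simp only [inner_sub_left, inner_sub_right]
    have h1 : ⟪S.ρ, β⟫ = ⟪β, S.ρ⟫ := hcomm _ _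
    have h2 : ⟪S.ρ, γ⟫ = ⟪γ, S.ρ⟫ := hcomm _ _
    have h3 : ⟪γ, β⟫ = ⟪β, γ⟫ := hcomm _ _
    have h4 : ⟪β, β⟫ = ⟪S.ρ, S.ρ⟫ := hβl
    have h5 : ⟪γ, γ⟫ = ⟪S.ρ, S.ρ⟫ := hγl
    linarith
  -- non-degeneracy facts
  have hβneρ : β ≠ S.ρ := by
    intro h; subst h; exact hρρ (by linarith)
  have hγneρ : γ ≠ S.ρ := by
    intro h; subst h; exact hρρ (by linarith)
  have hβnemγ : β ≠ -γ := by
    intro h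
    apply hγγ
    have := horth
    rw [h, inner_neg_left] at this
    linarith
  -- the ±1 facts
  have p1 : c β (γ - S.ρ) = 1 ∨ c β (γ - S.ρ) = -1 := by
    apply hpm β hβ _ hγmρ hβl hγmρl
    have he : β + (γ - S.ρ) = -(S.ρ - β - γ) := by abel
    rw [he]; exact S.neg_mem _ hmid
  have p2 : c γ (β - S.ρ) = 1 ∨ c γ (β - S.ρ) = -1 := by
    apply hpm γ hγ _ hβmρ hγl hβmρl
    have he : γ + (β - S.ρ) = -(S.ρ - β - γ) := by abel
    rw [he]; exact S.neg_mem _ hmid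
  have p3 : c β (-S.ρ) = 1 ∨ c β (-S.ρ) = -1 := by
    apply hpm β hβ _ hmρ hβl hmρl
    have he : β + -S.ρ = β - S.ρ := by abel
    rw [he]; exact hβmρ
  have p4 : c γ (-S.ρ) = 1 ∨ c γ (-S.ρ) = -1 := by
    apply hpm γ hγ _ hmρ hγl hmρl
    have he : γ + -S.ρ = γ - S.ρ := by abel
    rw [he]; exact hγmρ
  -- quadratic relation from h4
  have hq := h4 β hβ γ hγ (-S.ρ) hmρ (S.ρ - β - γ) hmid hβl hγl hmρl hmidl
    (by abel)
    hβnemγ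
    (by rw [neg_neg]; exact hβneρ)
    (by intro h
        have h1 : S.ρ - γ = 0 := by
          rw [show S.ρ - γ = β - -(S.ρ - β - γ) from by abel, ← h, sub_self]
        exact hγneρ (sub_eq_zero.mp h1).symm)
    (by rw [neg_neg]; exact hγneρ)
    (by intro h
        have h1 : S.ρ - β = 0 := by
          rw [show S.ρ - β = γ - -(S.ρ - β - γ) from by abel, ← h, sub_self]
        exact hβneρ (sub_eq_zero.mp h1).symm)
    (by intro h
        have h1 : β - -γ = 0 := by
          rw [show β - -γ = -(S.ρ - β - γ) - -S.ρ from by abel, ← h, sub_self]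
        exact hβnemγ (sub_eq_zero.mp h1))
  -- cyclic identities
  have cyc1 := hcyc β hβ (γ - S.ρ) hγmρ (S.ρ - β - γ) hmid hβl hγmρl hmidl (by abel)
  have cyc2 := hcyc γ hγ (β - S.ρ) hβmρ (S.ρ - β - γ) hmid hγl hβmρl hmidl (by abel)
  have a1 : c β (S.ρ - β - γ) = - c (S.ρ - β - γ) β := hanti _ hβ _ hmid
  have a2 : c γ (S.ρ - β - γ) = - c (S.ρ - β - γ) γ := hanti _ hγ _ hmid
  have a3 : c (-S.ρ) β = - c β (-S.ρ) := hanti _ hmρ _ hβ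
  have z : c β γ = 0 := hzero _ _ hβγ
  have E : c β (-S.ρ) * c γ (β - S.ρ) = c γ (-S.ρ) * c β (γ - S.ρ) := by
    have e1 : c (S.ρ - β - γ) β = c β (γ - S.ρ) := (cyc1.1.trans cyc1.2).symm
    have e2 : c (S.ρ - β - γ) γ = c γ (β - S.ρ) := (cyc2.1.trans cyc2.2).symm
    rw [z, a1, a2, a3, e1, e2] at hq
    linarith
  refine ⟨hβmρ, hγmρ, hmid, p1, p2, p3, p4, ?_⟩
  rcases p1 with h1 | h1 <;> rcases p2 with h2 | h2 <;> rcases p3 with h3 | h3 <;>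
    rcases p4 with h4' | h4' <;> rw [h1, h2, h3, h4'] at E ⊢ <;> revert E <;> norm_num
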